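/- Let g_1, …, g_n ∈ F_{q^m} be linearly independent over F_q, let r_1, …, r_n ∈ F_{q^m}, let f be a q-linearized polynomial over F_{q^m} of q-degree less than k, and let t be the F_q-dimension of the F_q-span of f(g_1) − r_1, …, f(g_n) − r_n. Then there exists a monic q-linearized polynomial D over F_{q^m} of q-degree t such that the q-linearized polynomial N(X) := D(f(X)) is zero or has q-degree at most t + k − 1 and satisfies N(g_i) = D(r_i) for all i = 1, …, n. -/

import Mathlib

open Polynomial

/-- `f` is a `q`-linearized polynomial: every monomial with nonzero coefficient
has exponent a power of `q`, i.e. `f = Σ aᵢ X^(q^i)`. -/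
def IsqLinearized (q : ℕ) {L : Type*} [Field L] (f : L[X]) : Prop :=
  ∀ i : ℕ, f.coeff i ≠ 0 → ∃ j : ℕ, i = q ^ j

section Aux

variable {L : Type*} [Field L]

lemma isqLin_pow_char (p : ℕ) [Fact p.Prime] [CharP L p] (e : ℕ)
    {f : L[X]} (hf : IsqLinearized (p ^ e) (f := f)) :
    IsqLinearized (p ^ e) (f ^ (p ^ e)) := by
  intro i hi
  have hq : 0 < p ^ e := pow_pos (Fact.out (p := p.Prime)).pos e
  rw [← Polynomial.map_iterateFrobenius_expand p, Polynomial.coeff_map] at hi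
  have h1 : (Polynomial.expand L (p ^ e) f).coeff i ≠ 0 := by
    intro h; rw [h, map_zero] at hi; exact hi rfl
  rw [Polynomial.coeff_expand hq] at h1
  by_cases hd : (p ^ e) ∣ i
  · obtain ⟨j, hj⟩ := hf (i / (p ^ e)) (by simpa [hd] using h1)
    exact ⟨j + 1, by rw [← Nat.div_mul_cancel hd, hj, pow_succ]⟩
  · simp [hd] at h1

lemma isqLin_pow_pow (p : ℕ) [Fact p.Prime] [CharP L p] (e : ℕ)
    {f : L[X]} (hf : IsqLinearized (p ^ e) f) (a : ℕ) :
    IsqLinearized (p ^ e) (f ^ (p ^ e) ^ a) := by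
  induction a with
  | zero => simpa using hf
  | succ a ih =>
    have : f ^ (p ^ e) ^ (a + 1) = (f ^ (p ^ e) ^ a) ^ (p ^ e) := by
      rw [pow_succ (p ^ e) a, pow_mul]
    rw [this]
    exact isqLin_pow_char p e ih

lemma isqLin_comp (p : ℕ) [Fact p.Prime] [CharP L p] (e : ℕ)
    {D f : L[X]} (hD : IsqLinearized (p ^ e) D) (hf : IsqLinearized (p ^ e) f) :
    IsqLinearized (p ^ e) (D.comp f) := by
  intro i hi
  rw [Polynomial.comp_eq_sum_left, Polynomial.sum_def, Polynomial.finset_sum_coeff] at hi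
  obtain ⟨j, hj, hcj⟩ := Finset.exists_ne_zero_of_sum_ne_zero hi
  obtain ⟨a, ha⟩ := hD j (Polynomial.mem_support_iff.mp hj)
  rw [Polynomial.coeff_C_mul] at hcj
  have h2 : (f ^ j).coeff i ≠ 0 := right_ne_zero_of_mul hcj
  rw [ha] at h2
  exact isqLin_pow_pow p e hf a i h2

end Aux

section Annih

variable {F L : Type*} [Field F] [Field L] [Algebra F L]

lemma annih_exists (q : ℕ) (hq2 : 2 ≤ q)
    (hadd : ∀ x y : L, (x + y) ^ q = x ^ q + y ^ q)
    (hsc : ∀ c : F, (algebraMap F L c) ^ q = algebraMap F L c)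
    (hpow : ∀ {f : L[X]}, IsqLinearized q f → IsqLinearized q (f ^ q))
    (l : List L) :
    ∃ D : L[X], D.Monic ∧ IsqLinearized q D ∧ D.natDegree = q ^ l.length ∧
      (∀ x y : L, D.eval (x + y) = D.eval x + D.eval y) ∧
      (∀ (c : F) (x : L), D.eval (algebraMap F L c * x) = algebraMap F L c * D.eval x) ∧
      (∀ a ∈ l, D.eval a = 0) := by
  induction l with
  | nil =>
    refine ⟨X, monic_X, ?_, by simp, by simp, by simp, by simp⟩
    intro i hi
    simp [Polynomial.coeff_X] at hi
    exact ⟨0, by rw [pow_zero]; omega⟩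
  | cons a l ih =>
    obtain ⟨D, hmon, hlin, hdeg, haddD, hscD, hroot⟩ := ih
    set c : L := (D.eval a) ^ (q - 1) with hc
    have hdegq : (D ^ q).natDegree = q ^ (l.length + 1) := by
      rw [natDegree_pow, hdeg, ← pow_succ']
    have hlt : (C c * D).natDegree < (D ^ q).natDegree := by
      calc (C c * D).natDegree ≤ D.natDegree := natDegree_C_mul_le c D
        _ < _ := by
            rw [hdeg, hdegq]
            exact Nat.pow_lt_pow_succ (by omega)
    refine ⟨D ^ q - C c * D, ?_, ?_, ?_, ?_, ?_, ?_⟩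
    · exact (hmon.pow q).sub_of_left (degree_lt_degree hlt)
    · intro i hi
      rw [coeff_sub] at hi
      have h2 : (D ^ q).coeff i ≠ 0 ∨ (C c * D).coeff i ≠ 0 := by
        by_contra h
        push_neg at h
        rw [h.1, h.2] at hi
        simp at hi
      rcases h2 with h | h
      · exact hpow hlin i h
      · exact hlin i (by rw [coeff_C_mul] at h; exact right_ne_zero_of_mul h)
    · rw [natDegree_sub_eq_left_of_natDegree_lt hlt, hdegq, List.length_cons]
    · intro x y
      simp only [eval_sub, eval_mul, eval_pow, eval_C, haddD x y, hadd]
      ring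
    · intro cf x
      simp only [eval_sub, eval_mul, eval_pow, eval_C, hscD]
      rw [mul_pow, hsc]
      ring
    · intro b hb
      rcases List.mem_cons.mp hb with rfl | hb
      · simp only [eval_sub, eval_mul, eval_pow, eval_C, hc]
        rw [← pow_succ, Nat.sub_add_cancel (by omega), sub_self]
      · have h0 := hroot b hb
        simp [h0, zero_pow (by omega : q ≠ 0)]

end Annih

/-- If the codeword of `f` (of `q`-degree less than `k`) has rank distance `t` to `r`,
then there is a monic `q`-linearized `D` of `q`-degree `t` such that `N := D ∘ f` is
zero or of `q`-degree at most `t + k − 1` and satisfies `N(gᵢ) = D(rᵢ)` for all `i`. -/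
theorem closest_codeword_gives_interpolating_pair
    (q m : ℕ) (hq : IsPrimePow q) (hm : 0 < m)
    (F L : Type*) [Field F] [Field L] [Fintype F] [Fintype L] [Algebra F L]
    (hcardF : Fintype.card F = q) (hcardL : Fintype.card L = q ^ m)
    (n k : ℕ) (hk : 0 < k) (g r : Fin n → L) (hg : LinearIndependent F g)
    (f : L[X]) (hf : IsqLinearized q f) (hfd : f.natDegree < q ^ k)
    (t : ℕ)
    (ht : Module.finrank F
        (Submodule.span F (Set.range fun i => f.eval (g i) - r i)) = t) :
    ∃ D : L[X], D.Monic ∧ IsqLinearized q D ∧ D.natDegree = q ^ t ∧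
      IsqLinearized q (D.comp f) ∧ (D.comp f).natDegree ≤ q ^ (t + k - 1) ∧
      ∀ i, (D.comp f).eval (g i) = D.eval (r i) := by
  obtain ⟨p, e, hp, he, rfl⟩ := hq
  have hpn : p.Prime := Nat.prime_iff.mpr hp
  haveI : Fact p.Prime := ⟨hpn⟩
  have hq2 : 2 ≤ p ^ e := Nat.one_lt_pow he.ne' hpn.one_lt
  -- characteristic of L is p
  haveI : CharP L p := by
    obtain ⟨nn, hp', hcard'⟩ := FiniteField.card L (ringChar L)
    have hpp : p = ringChar L := by
      have h1 : p ∣ ringChar L ^ (nn : ℕ) := by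
        rw [← hcard', hcardL, ← pow_mul]
        exact dvd_pow_self p (by positivity)
      exact (Nat.prime_dvd_prime_iff_eq hpn hp').mp (hpn.dvd_of_dvd_pow h1)
    exact hpp ▸ ringChar.charP L
  have hadd : ∀ x y : L, (x + y) ^ (p ^ e) = x ^ (p ^ e) + y ^ (p ^ e) :=
    fun x y => add_pow_char_pow x y p e
  have hsc : ∀ c : F, (algebraMap F L c) ^ (p ^ e) = algebraMap F L c := by
    intro c
    rw [← map_pow]
    congr 1
    rw [← hcardF]
    exact FiniteField.pow_card c
  have hpow : ∀ {h : L[X]}, IsqLinearized (p ^ e) h → IsqLinearized (p ^ e) (h ^ (p ^ e)) :=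
    fun {h} hh => isqLin_pow_char p e hh
  -- the subspace and its basis
  haveI : FiniteDimensional F L := Module.Finite.of_finite
  set V := Submodule.span F (Set.range fun i => f.eval (g i) - r i) with hV
  let b : Module.Basis (Fin t) F V := Module.finBasisOfFinrankEq F V ht
  obtain ⟨D, hmon, hlinD, hdegD, haddD, hscD, hrootD⟩ :=
    annih_exists (F := F) (p ^ e) hq2 hadd hsc hpow (List.ofFn fun i => ((b i : L)))
  rw [List.length_ofFn] at hdegD
  -- eval of D is F-linear
  let ℓ : L →ₗ[F] L :=
    { toFun := fun x => D.eval x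
      map_add' := haddD
      map_smul' := by
        intro c x
        simp only [RingHom.id_apply, Algebra.smul_def]
        exact hscD c x }
  have hVspan : Submodule.span F (Set.range fun i : Fin t => ((b i : L))) = V := by
    calc Submodule.span F (Set.range fun i : Fin t => ((b i : L)))
        = Submodule.map V.subtype (Submodule.span F (Set.range b)) := by
          rw [Submodule.map_span]
          congr 1
          rw [← Set.range_comp]
          rfl
      _ = Submodule.map V.subtype ⊤ := by rw [b.span_eq]
      _ = V := Submodule.map_subtype_top V
  have hker : V ≤ LinearMap.ker ℓ := by
    rw [← hVspan]
    apply Submodule.span_le.mpr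
    rintro x ⟨i, rfl⟩
    exact LinearMap.mem_ker.mpr (hrootD _ (by simp [List.mem_ofFn]))
  have hDzero : ∀ v ∈ V, D.eval v = 0 := fun v hv => LinearMap.mem_ker.mp (hker hv)
  -- degree bound on f
  have hfdeg : f.natDegree ≤ (p ^ e) ^ (k - 1) := by
    by_cases hf0 : f = 0
    · simp [hf0]
    · obtain ⟨j, hj⟩ := hf f.natDegree
        (by rw [Polynomial.coeff_natDegree]; exact Polynomial.leadingCoeff_ne_zero.mpr hf0)
      rw [hj] at hfd ⊢
      have hjk : j < k := (Nat.pow_lt_pow_iff_right (by omega)).mp hfd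
      exact Nat.pow_le_pow_right (by omega) (by omega)
  refine ⟨D, hmon, hlinD, hdegD, isqLin_comp p e hlinD hf, ?_, ?_⟩
  · calc (D.comp f).natDegree = D.natDegree * f.natDegree := Polynomial.natDegree_comp
      _ ≤ (p ^ e) ^ t * (p ^ e) ^ (k - 1) := by
          rw [hdegD]; exact Nat.mul_le_mul_left _ hfdeg
      _ = (p ^ e) ^ (t + (k - 1)) := (pow_add _ _ _).symm
      _ = (p ^ e) ^ (t + k - 1) := by congr 1; omega
  · intro i
    rw [Polynomial.eval_comp]
    have hx : f.eval (g i) = r i + (f.eval (g i) - r i) := by ring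
    rw [hx, haddD, hDzero _ (Submodule.subset_span ⟨i, rfl⟩), add_zero]
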